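/- arXiv:1606.09583 — 2 statements merged into one kernel-verified Lean document; each statement's English description precedes it below -/
import Mathlib

section
/- Let T > 0 and C₁, C₂ ≥ 0. Let a, b : [0,T] → ℝ³ satisfy ‖a(t)‖ ≤ C₂ and ‖b(t)‖ ≤ C₂ for all t ∈ [0,T], and let V : [0,T] → ℝ³ be differentiable with V′(t) = (V(t) − a(t)) × b(t) for all t ∈ [0,T] (× denotes the three-dimensional cross product) and ‖V(0)‖ ≤ C₁. Then for every t ∈ [0,T], ‖V(t)‖² ≤ C₁² e^t + (e^t − 1) C₂⁴. -/
open MeasureTheory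
open scoped RealInnerProductSpace

/-- The cross product on `ℝ³` with the Euclidean norm. -/
noncomputable def cross3 (u v : EuclideanSpace ℝ (Fin 3)) : EuclideanSpace ℝ (Fin 3) :=
  (EuclideanSpace.equiv (Fin 3) ℝ).symm
    ![u 1 * v 2 - u 2 * v 1, u 2 * v 0 - u 0 * v 2, u 0 * v 1 - u 1 * v 0]

lemma inner_cross3_self (u v : EuclideanSpace ℝ (Fin 3)) : ⟪u, cross3 u v⟫ = 0 := by
  simp [cross3, PiLp.inner_apply, Fin.sum_univ_three, EuclideanSpace.equiv]
  ring

lemma cross3_sub_left (u w v : EuclideanSpace ℝ (Fin 3)) :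
    cross3 (u - w) v = cross3 u v - cross3 w v := by
  ext i
  fin_cases i <;> simp [cross3, EuclideanSpace.equiv] <;> ring

lemma norm_cross3_le (u v : EuclideanSpace ℝ (Fin 3)) : ‖cross3 u v‖ ≤ ‖u‖ * ‖v‖ := by
  have h2 : ‖cross3 u v‖ ^ 2 + ⟪u, v⟫ ^ 2 = (‖u‖ * ‖v‖) ^ 2 := by
    rw [← real_inner_self_eq_norm_sq, mul_pow, ← real_inner_self_eq_norm_sq,
      ← real_inner_self_eq_norm_sq]
    simp only [cross3, PiLp.inner_apply, Fin.sum_univ_three, EuclideanSpace.equiv]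
    simp
    ring
  nlinarith [sq_nonneg (⟪u, v⟫), norm_nonneg (cross3 u v),
    mul_nonneg (norm_nonneg u) (norm_nonneg v)]


/-- Growth bound for the velocity component of the Vlasov characteristics:
if `V′ = (V − a) × b` with `‖a‖, ‖b‖ ≤ C₂` on `[0,T]` and `‖V(0)‖ ≤ C₁`, then
`‖V(t)‖² ≤ C₁² eᵗ + (eᵗ − 1) C₂⁴` on `[0,T]`. -/
theorem characteristic_velocity_bound (T : ℝ) (hT : 0 < T)
    (C₁ C₂ : ℝ) (hC₁ : 0 ≤ C₁) (hC₂ : 0 ≤ C₂)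
    (a b V : ℝ → EuclideanSpace ℝ (Fin 3))
    (ha : ∀ t ∈ Set.Icc (0 : ℝ) T, ‖a t‖ ≤ C₂)
    (hb : ∀ t ∈ Set.Icc (0 : ℝ) T, ‖b t‖ ≤ C₂)
    (hV : ∀ t ∈ Set.Icc (0 : ℝ) T, HasDerivAt V (cross3 (V t - a t) (b t)) t)
    (hV0 : ‖V 0‖ ≤ C₁) :
    ∀ t ∈ Set.Icc (0 : ℝ) T,
      ‖V t‖ ^ 2 ≤ C₁ ^ 2 * Real.exp t + (Real.exp t - 1) * C₂ ^ 4 := by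
  set f : ℝ → ℝ := fun s => ‖V s‖ ^ 2 with hf
  set f' : ℝ → ℝ := fun s => -(2 * ⟪V s, cross3 (a s) (b s)⟫) with hf'
  have hderiv : ∀ x ∈ Set.Icc (0 : ℝ) T, HasDerivAt f (f' x) x := by
    intro x hx
    have h := (hV x hx).inner ℝ (hV x hx)
    have hval : ⟪V x, cross3 (V x - a x) (b x)⟫ + ⟪cross3 (V x - a x) (b x), V x⟫
        = f' x := by
      have e1 : ⟪V x, cross3 (V x) (b x)⟫ = 0 := inner_cross3_self _ _
      have e2 : ⟪cross3 (V x) (b x), V x⟫ = 0 := by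
        rw [real_inner_comm]; exact inner_cross3_self _ _
      have e3 : ⟪cross3 (a x) (b x), V x⟫ = ⟪V x, cross3 (a x) (b x)⟫ :=
        real_inner_comm _ _
      rw [cross3_sub_left, inner_sub_right, inner_sub_left, e1, e2, e3]
      simp only [hf']
      ring
    rw [hval] at h
    have : (fun t => ⟪V t, V t⟫) = f := by
      funext s; rw [real_inner_self_eq_norm_sq]
    rwa [this] at h
  have key := norm_le_gronwallBound_of_norm_deriv_right_le (f := f) (f' := f')
    (δ := C₁ ^ 2) (K := 1) (ε := C₂ ^ 4) (a := 0) (b := T)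
    (fun x hx => (hderiv x hx).continuousAt.continuousWithinAt)
    (fun x hx => (hderiv x (Set.mem_Icc.2 ⟨hx.1, hx.2.le⟩)).hasDerivWithinAt)
    (by
      simp only [hf, Real.norm_eq_abs, abs_of_nonneg (by positivity : (0:ℝ) ≤ ‖V 0‖ ^ 2)]
      exact pow_le_pow_left₀ (norm_nonneg _) hV0 2)
    (by
      intro x hx
      have hx' : x ∈ Set.Icc (0 : ℝ) T := ⟨hx.1, hx.2.le⟩
      have h1 : |⟪V x, cross3 (a x) (b x)⟫| ≤ ‖V x‖ * (C₂ * C₂) := by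
        refine (abs_real_inner_le_norm _ _).trans ?_
        refine mul_le_mul_of_nonneg_left ?_ (norm_nonneg _)
        refine (norm_cross3_le _ _).trans ?_
        exact mul_le_mul (ha x hx') (hb x hx') (norm_nonneg _) hC₂
      simp only [hf', hf, Real.norm_eq_abs, abs_neg, abs_mul, abs_two,
        abs_of_nonneg (by positivity : (0:ℝ) ≤ ‖V x‖ ^ 2)]
      nlinarith [sq_nonneg (‖V x‖ - C₂ * C₂), norm_nonneg (V x), abs_nonneg (⟪V x, cross3 (a x) (b x)⟫)])
  intro t ht
  have h := key t ht
  rw [gronwallBound_of_K_ne_0 one_ne_zero] at h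
  simp only [hf, Real.norm_eq_abs, abs_of_nonneg (by positivity : (0:ℝ) ≤ ‖V t‖ ^ 2),
    sub_zero, one_mul, div_one] at h
  linarith
end

section
/- Let T > 0, let C ≥ 0 and K ≥ 0, and let f_k, f : (0,T) × T³ × ℝ³ → ℝ be measurable with 0 ≤ f_k ≤ C a.e. for every k and 0 ≤ f ≤ C a.e. Assume: (i) for every g ∈ L¹((0,T) × T³ × ℝ³), ∫ f_k g → ∫ f g as k → ∞ (weak* convergence in L^∞); and (ii) ∫_{(0,T)×T³×ℝ³} |v|² f_k(t,x,v) dv dx dt ≤ K for every k. Then for every φ ∈ L^∞((0,T) × T³) with φ ≥ 0 a.e., the function (t,x,v) ↦ |v| f(t,x,v) φ(t,x) is integrable and ∫_{(0,T)×T³×ℝ³} |v| f_k(t,x,v) φ(t,x) dv dx dt → ∫_{(0,T)×T³×ℝ³} |v| f(t,x,v) φ(t,x) dv dx dt as k → ∞. -/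
open MeasureTheory ENNReal Filter Topology

local instance : Fact (0 < 2 * Real.pi) := ⟨by positivity⟩

/-- The spatial torus `T³ = (ℝ/2πℤ)³`. -/
abbrev Torus3 : Type := Fin 3 → AddCircle (2 * Real.pi)

/-- The velocity space `ℝ³` with the Euclidean norm. -/
abbrev Vel3 : Type := EuclideanSpace ℝ (Fin 3)

/-- The measure on `(0,T) × T³ × ℝ³`. -/
noncomputable def μT (T : ℝ) : Measure (ℝ × Torus3 × Vel3) :=
  (volume.restrict (Set.Ioo 0 T)).prod volume

/-- The measure on `(0,T) × T³`. -/
noncomputable def νT (T : ℝ) : Measure (ℝ × Torus3) :=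
  (volume.restrict (Set.Ioo 0 T)).prod volume

/-- Integral bound from a lintegral bound, packaged with integrability. -/
lemma aux_int_le {α : Type*} [MeasurableSpace α] {μ : Measure α} {g : α → ℝ} {B : ℝ}
    (hB : 0 ≤ B) (hg : AEStronglyMeasurable g μ) (h0 : 0 ≤ᵐ[μ] g)
    (hle : ∫⁻ a, ENNReal.ofReal (g a) ∂μ ≤ ENNReal.ofReal B) :
    Integrable g μ ∧ ∫ a, g a ∂μ ≤ B := by
  have hcongr : (∫⁻ a, (‖g a‖₊ : ℝ≥0∞) ∂μ) = ∫⁻ a, ENNReal.ofReal (g a) ∂μ := by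
    refine lintegral_congr_ae ?_
    filter_upwards [h0] with a ha
    rw [← enorm_eq_nnnorm, ← ofReal_norm, Real.norm_eq_abs, abs_of_nonneg ha]
  have hint : Integrable g μ := by
    refine ⟨hg, ?_⟩
    rw [HasFiniteIntegral]; simp only [enorm_eq_nnnorm]; rw [hcongr]
    exact lt_of_le_of_lt hle ofReal_lt_top
  refine ⟨hint, ?_⟩
  rw [integral_eq_lintegral_of_nonneg_ae h0 hg]
  calc (∫⁻ a, ENNReal.ofReal (g a) ∂μ).toReal ≤ (ENNReal.ofReal B).toReal :=
        ENNReal.toReal_mono ofReal_ne_top hle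
    _ = B := ENNReal.toReal_ofReal hB

/-- a.e. transfer from `νT` to `μT`. -/
lemma aux_ae_comp (T : ℝ) {p : ℝ × Torus3 → Prop} (hp : ∀ᵐ q ∂νT T, p q) :
    ∀ᵐ z ∂μT T, p (z.1, z.2.1) := by
  rw [ae_iff] at hp ⊢
  set N := toMeasurable (νT T) {q | ¬ p q} with hNdef
  have hNm : MeasurableSet N := measurableSet_toMeasurable _ _
  have hN : (νT T) N = 0 := by rw [hNdef, measure_toMeasurable]; exact hp
  have hslice : (fun t => (volume : Measure Torus3) (Prod.mk t ⁻¹' N))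
      =ᵐ[(volume : Measure ℝ).restrict (Set.Ioo 0 T)] 0 :=
    (Measure.measure_prod_null hNm).1 hN
  have hπ : Measurable (fun z : ℝ × Torus3 × Vel3 => (z.1, z.2.1)) :=
    measurable_fst.prodMk (measurable_snd.comp measurable_id |>.fst)
  have hm : MeasurableSet {z : ℝ × Torus3 × Vel3 | (z.1, z.2.1) ∈ N} := hπ hNm
  have key : (μT T) {z : ℝ × Torus3 × Vel3 | (z.1, z.2.1) ∈ N} = 0 := by
    rw [μT, Measure.prod_apply hm]
    have heq : ∀ t : ℝ, (volume : Measure (Torus3 × Vel3))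
        (Prod.mk t ⁻¹' {z : ℝ × Torus3 × Vel3 | (z.1, z.2.1) ∈ N})
        = (volume : Measure Torus3) (Prod.mk t ⁻¹' N) * (volume : Measure Vel3) Set.univ := by
      intro t
      have hset : Prod.mk t ⁻¹' {z : ℝ × Torus3 × Vel3 | (z.1, z.2.1) ∈ N}
          = (Prod.mk t ⁻¹' N) ×ˢ (Set.univ : Set Vel3) := by
        ext q; simp [Set.mem_prod]
      rw [hset, Measure.volume_eq_prod, Measure.prod_prod]
    simp only [heq]
    have hz : (fun t => (volume : Measure Torus3) (Prod.mk t ⁻¹' N)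
          * (volume : Measure Vel3) Set.univ)
        =ᵐ[(volume : Measure ℝ).restrict (Set.Ioo 0 T)] 0 := by
      filter_upwards [hslice] with t ht
      simp only [Pi.zero_apply] at ht ⊢
      rw [ht, zero_mul]
    rw [lintegral_congr_ae hz]; simp
  refine measure_mono_null ?_ key
  intro z hz
  exact subset_toMeasurable _ _ hz

/-- A uniform second-moment bound upgrades weak* `L^∞` convergence of
the densities to convergence of the first absolute velocity moments against bounded
nonnegative weights. -/
theorem first_moment_weakstar_convergence (T : ℝ) (hT : 0 < T)
    (C K : ℝ) (hC : 0 ≤ C) (hK : 0 ≤ K)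
    (fk : ℕ → ℝ × Torus3 × Vel3 → ℝ) (f : ℝ × Torus3 × Vel3 → ℝ)
    (hfkmeas : ∀ k, Measurable (fk k)) (hfmeas : Measurable f)
    (hfkbd : ∀ k, ∀ᵐ z ∂μT T, 0 ≤ fk k z ∧ fk k z ≤ C)
    (hfbd : ∀ᵐ z ∂μT T, 0 ≤ f z ∧ f z ≤ C)
    (hconv : ∀ g : ℝ × Torus3 × Vel3 → ℝ, Integrable g (μT T) →
      Tendsto (fun k => ∫ z, fk k z * g z ∂μT T) atTop (𝓝 (∫ z, f z * g z ∂μT T)))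
    (hmom : ∀ k, (∫⁻ z, ENNReal.ofReal (‖z.2.2‖ ^ 2 * fk k z) ∂μT T) ≤ ENNReal.ofReal K) :
    ∀ φ : ℝ × Torus3 → ℝ, Measurable φ → MemLp φ ⊤ (νT T) →
      (∀ᵐ q ∂νT T, 0 ≤ φ q) →
      Integrable (fun z => ‖z.2.2‖ * f z * φ (z.1, z.2.1)) (μT T) ∧
        Tendsto (fun k => ∫ z, ‖z.2.2‖ * fk k z * φ (z.1, z.2.1) ∂μT T) atTop
          (𝓝 (∫ z, ‖z.2.2‖ * f z * φ (z.1, z.2.1) ∂μT T)) := by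
  intro φ hφm hφmem hφpos
  classical
  -- the essential bound on φ
  set M := (eLpNormEssSup φ (νT T)).toReal with hMdef
  have hM0 : 0 ≤ M := ENNReal.toReal_nonneg
  have hMtop : eLpNormEssSup φ (νT T) < ⊤ := by
    have := hφmem.2; rwa [eLpNorm_exponent_top] at this
  have hφM : ∀ᵐ q ∂νT T, |φ q| ≤ M ∧ 0 ≤ φ q := by
    filter_upwards [ae_le_eLpNormEssSup (f := φ) (μ := νT T), hφpos] with q hq hq0
    refine ⟨?_, hq0⟩
    have := ENNReal.toReal_mono hMtop.ne hq
    simpa [Real.norm_eq_abs] using this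
  have hφM' : ∀ᵐ z ∂μT T, |φ (z.1, z.2.1)| ≤ M ∧ 0 ≤ φ (z.1, z.2.1) := aux_ae_comp T hφM
  -- measurability
  have hnm : Measurable fun z : ℝ × Torus3 × Vel3 => ‖z.2.2‖ := measurable_snd.snd.norm
  have hφc : Measurable fun z : ℝ × Torus3 × Vel3 => φ (z.1, z.2.1) :=
    hφm.comp (measurable_fst.prodMk measurable_snd.fst)
  -- finite measure of "velocity balls"
  have hSm : ∀ R : ℝ, MeasurableSet {z : ℝ × Torus3 × Vel3 | ‖z.2.2‖ ≤ R} :=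
    fun R => measurableSet_le hnm measurable_const
  have hSball : ∀ R : ℝ, μT T {z : ℝ × Torus3 × Vel3 | ‖z.2.2‖ ≤ R} < ⊤ := by
    intro R
    have hset : {z : ℝ × Torus3 × Vel3 | ‖z.2.2‖ ≤ R}
        = Set.univ ×ˢ ((Set.univ : Set Torus3) ×ˢ Metric.closedBall 0 R) := by
      ext z; simp [Set.mem_prod, mem_closedBall_zero_iff]
    rw [μT, hset, Measure.volume_eq_prod, Measure.prod_prod, Measure.prod_prod]
    have h1 : (volume.restrict (Set.Ioo 0 T)) Set.univ < ⊤ := by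
      rw [Measure.restrict_apply_univ, Real.volume_Ioo]; exact ofReal_lt_top
    have h2 : (volume : Measure Torus3) Set.univ < ⊤ := measure_lt_top _ _
    have h3 : (volume : Measure Vel3) (Metric.closedBall 0 R) < ⊤ := measure_closedBall_lt_top
    exact ENNReal.mul_lt_top h1 (ENNReal.mul_lt_top h2 h3)
  -- the truncated weight
  set trunc : ℝ → (ℝ × Torus3 × Vel3 → ℝ) :=
    fun R z => if ‖z.2.2‖ ≤ R then ‖z.2.2‖ * φ (z.1, z.2.1) else 0 with htruncdef
  have htruncm : ∀ R, Measurable (trunc R) :=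
    fun R => Measurable.ite (hSm R) (hnm.mul hφc) measurable_const
  have htruncint : ∀ R, Integrable (trunc R) (μT T) := by
    intro R
    refine Integrable.mono'
        (g := ({z : ℝ × Torus3 × Vel3 | ‖z.2.2‖ ≤ R}).indicator fun _ => |R| * M) ?_
        (htruncm R).aestronglyMeasurable ?_
    · rw [integrable_indicator_iff (hSm R)]
      exact integrableOn_const (hSball R).ne enorm_ne_top
    · filter_upwards [hφM'] with z hz
      simp only [htruncdef, Set.indicator_apply, Set.mem_setOf_eq]
      by_cases h : ‖z.2.2‖ ≤ R
      · simp only [if_pos h]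
        rw [norm_mul, norm_norm]
        have h1 : ‖z.2.2‖ ≤ |R| := h.trans (le_abs_self R)
        have h2 : ‖φ (z.1, z.2.1)‖ ≤ M := by rw [Real.norm_eq_abs]; exact hz.1
        exact mul_le_mul h1 h2 (norm_nonneg _) (abs_nonneg R)
      · simp only [if_neg h, norm_zero]
        positivity
  -- second moment truncation test functions
  set gnat : ℕ → (ℝ × Torus3 × Vel3 → ℝ) :=
    fun n z => if ‖z.2.2‖ ≤ (n : ℝ) then ‖z.2.2‖ ^ 2 else 0 with hgnatdef
  have hgnatm : ∀ n, Measurable (gnat n) :=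
    fun n => Measurable.ite (hSm n) (hnm.pow_const 2) measurable_const
  have hgnat0 : ∀ n z, 0 ≤ gnat n z := by
    intro n z; simp only [hgnatdef]
    split <;> positivity
  have hgnatle : ∀ n z, gnat n z ≤ ‖z.2.2‖ ^ 2 := by
    intro n z; simp only [hgnatdef]
    split
    · exact le_refl _
    · positivity
  have hgnatint : ∀ n : ℕ, Integrable (gnat n) (μT T) := by
    intro n
    refine Integrable.mono'
        (g := ({z : ℝ × Torus3 × Vel3 | ‖z.2.2‖ ≤ (n : ℝ)}).indicator fun _ => (n : ℝ) ^ 2) ?_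
        (hgnatm n).aestronglyMeasurable ?_
    · rw [integrable_indicator_iff (hSm n)]
      exact integrableOn_const (hSball n).ne enorm_ne_top
    · refine Eventually.of_forall fun z => ?_
      simp only [hgnatdef, Set.indicator_apply, Set.mem_setOf_eq]
      by_cases h : ‖z.2.2‖ ≤ (n : ℝ)
      · simp only [if_pos h]
        rw [Real.norm_eq_abs, abs_of_nonneg (by positivity)]
        exact pow_le_pow_left₀ (norm_nonneg _) h 2
      · simp only [if_neg h, norm_zero]
        positivity
  -- product of a bounded density with an integrable function is integrable
  have hprodint : ∀ (h g : ℝ × Torus3 × Vel3 → ℝ), Measurable h →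
      (∀ᵐ z ∂μT T, 0 ≤ h z ∧ h z ≤ C) → Integrable g (μT T) →
      Integrable (fun z => h z * g z) (μT T) := by
    intro h g hhm hhbd hgint
    refine Integrable.mono' (g := fun z => C * ‖g z‖) (hgint.norm.const_mul C)
        (hhm.aestronglyMeasurable.mul hgint.1) ?_
    filter_upwards [hhbd] with z hz
    rw [norm_mul]
    exact mul_le_mul_of_nonneg_right (by rw [Real.norm_eq_abs, abs_of_nonneg hz.1]; exact hz.2)
      (norm_nonneg _)
  -- second moment bound passes to the limit
  have hfkg : ∀ k n, ∫ z, fk k z * gnat n z ∂μT T ≤ K := by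
    intro k n
    have h0 : 0 ≤ᵐ[μT T] fun z => fk k z * gnat n z := by
      filter_upwards [hfkbd k] with z hz
      exact mul_nonneg hz.1 (hgnat0 n z)
    refine (aux_int_le hK (((hfkmeas k).mul (hgnatm n)).aestronglyMeasurable) h0 ?_).2
    refine le_trans (lintegral_mono_ae ?_) (hmom k)
    filter_upwards [hfkbd k] with z hz
    apply ENNReal.ofReal_le_ofReal
    calc fk k z * gnat n z ≤ fk k z * ‖z.2.2‖ ^ 2 :=
          mul_le_mul_of_nonneg_left (hgnatle n z) hz.1
      _ = ‖z.2.2‖ ^ 2 * fk k z := mul_comm _ _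
  have hfg : ∀ n : ℕ, ∫ z, f z * gnat n z ∂μT T ≤ K := fun n =>
    le_of_tendsto (hconv (gnat n) (hgnatint n)) (Eventually.of_forall fun k => hfkg k n)
  have hfgl : ∀ n : ℕ, (∫⁻ z, ENNReal.ofReal (f z * gnat n z) ∂μT T) ≤ ENNReal.ofReal K := by
    intro n
    have h0 : 0 ≤ᵐ[μT T] fun z => f z * gnat n z := by
      filter_upwards [hfbd] with z hz; exact mul_nonneg hz.1 (hgnat0 n z)
    rw [← ofReal_integral_eq_lintegral_ofReal (hprodint f (gnat n) hfmeas hfbd (hgnatint n)) h0]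
    exact ENNReal.ofReal_le_ofReal (hfg n)
  have hmonog : ∀ᵐ z ∂μT T, Monotone fun n : ℕ => ENNReal.ofReal (f z * gnat n z) := by
    filter_upwards [hfbd] with z hz
    intro a b hab
    apply ENNReal.ofReal_le_ofReal
    apply mul_le_mul_of_nonneg_left _ hz.1
    simp only [hgnatdef]
    by_cases h : ‖z.2.2‖ ≤ (a : ℝ)
    · rw [if_pos h, if_pos (h.trans (by exact_mod_cast hab))]
    · rw [if_neg h]
      split <;> positivity
  have hmomf : (∫⁻ z, ENNReal.ofReal (‖z.2.2‖ ^ 2 * f z) ∂μT T) ≤ ENNReal.ofReal K := by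
    have hsup : ∀ᵐ z ∂μT T, ENNReal.ofReal (‖z.2.2‖ ^ 2 * f z)
        = ⨆ n : ℕ, ENNReal.ofReal (f z * gnat n z) := by
      filter_upwards [hfbd] with z hz
      refine le_antisymm ?_ ?_
      · have hle : ‖z.2.2‖ ≤ ((⌈‖z.2.2‖⌉₊ : ℕ) : ℝ) := Nat.le_ceil _
        have heq : gnat ⌈‖z.2.2‖⌉₊ z = ‖z.2.2‖ ^ 2 := by
          simp only [hgnatdef]; rw [if_pos hle]
        refine le_trans ?_ (le_iSup _ ⌈‖z.2.2‖⌉₊)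
        exact le_of_eq (by rw [heq, mul_comm (f z)])
      · refine iSup_le fun n => ?_
        apply ENNReal.ofReal_le_ofReal
        rw [mul_comm (‖z.2.2‖ ^ 2)]
        exact mul_le_mul_of_nonneg_left (hgnatle n z) hz.1
    rw [lintegral_congr_ae hsup,
      lintegral_iSup' (f := fun n z => ENNReal.ofReal (f z * gnat n z)) (fun n => ((hfmeas.mul (hgnatm n)).ennreal_ofReal).aemeasurable) hmonog]
    exact iSup_le fun n => hfgl n
  -- main integrability + tail estimate, for any density with the moment bound
  have main : ∀ h : ℝ × Torus3 × Vel3 → ℝ, Measurable h →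
      (∀ᵐ z ∂μT T, 0 ≤ h z ∧ h z ≤ C) →
      (∫⁻ z, ENNReal.ofReal (‖z.2.2‖ ^ 2 * h z) ∂μT T) ≤ ENNReal.ofReal K →
      Integrable (fun z => ‖z.2.2‖ * h z * φ (z.1, z.2.1)) (μT T) ∧
      ∀ R : ℝ, 0 < R →
        |(∫ z, ‖z.2.2‖ * h z * φ (z.1, z.2.1) ∂μT T) - ∫ z, h z * trunc R z ∂μT T|
          ≤ M * K / R := by
    intro h hhm hhbd hhmom
    have hψm : Measurable fun z : ℝ × Torus3 × Vel3 => ‖z.2.2‖ * h z * φ (z.1, z.2.1) :=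
      (hnm.mul hhm).mul hφc
    have hψint : Integrable (fun z => ‖z.2.2‖ * h z * φ (z.1, z.2.1)) (μT T) := by
      refine ⟨hψm.aestronglyMeasurable, ?_⟩
      rw [HasFiniteIntegral]
      have hbd : ∀ᵐ z ∂μT T, (‖(‖z.2.2‖ * h z * φ (z.1, z.2.1))‖₊ : ℝ≥0∞)
          ≤ ({z : ℝ × Torus3 × Vel3 | ‖z.2.2‖ ≤ 1}).indicator
              (fun _ => ENNReal.ofReal (M * C)) z
            + ENNReal.ofReal M * ENNReal.ofReal (‖z.2.2‖ ^ 2 * h z) := by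
        filter_upwards [hφM', hhbd] with z hz hhz
        rw [← enorm_eq_nnnorm, ← ofReal_norm]
        have habs : ‖(‖z.2.2‖ * h z * φ (z.1, z.2.1))‖ = ‖z.2.2‖ * h z * |φ (z.1, z.2.1)| := by
          rw [Real.norm_eq_abs, abs_mul, abs_of_nonneg (mul_nonneg (norm_nonneg _) hhz.1)]
        by_cases hv : ‖z.2.2‖ ≤ 1
        · have hb : ‖(‖z.2.2‖ * h z * φ (z.1, z.2.1))‖ ≤ M * C := by
            rw [habs]
            calc ‖z.2.2‖ * h z * |φ (z.1, z.2.1)| ≤ (1 * C) * M :=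
                  mul_le_mul (mul_le_mul hv hhz.2 hhz.1 zero_le_one) hz.1 (abs_nonneg _)
                    (by positivity)
              _ = M * C := by ring
          refine le_trans ?_ le_self_add
          rw [Set.indicator_of_mem (by exact hv)]
          exact ENNReal.ofReal_le_ofReal hb
        · push_neg at hv
          have h2 : ‖z.2.2‖ ≤ ‖z.2.2‖ ^ 2 := by nlinarith [norm_nonneg z.2.2]
          have hb : ‖(‖z.2.2‖ * h z * φ (z.1, z.2.1))‖ ≤ M * (‖z.2.2‖ ^ 2 * h z) := by
            rw [habs]
            calc ‖z.2.2‖ * h z * |φ (z.1, z.2.1)| ≤ (‖z.2.2‖ ^ 2 * h z) * M :=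
                  mul_le_mul (mul_le_mul_of_nonneg_right h2 hhz.1) hz.1 (abs_nonneg _)
                    (mul_nonneg (by positivity) hhz.1)
              _ = M * (‖z.2.2‖ ^ 2 * h z) := by ring
          refine le_trans ?_ le_add_self
          rw [← ENNReal.ofReal_mul hM0]
          exact ENNReal.ofReal_le_ofReal hb
      calc (∫⁻ z, (‖(‖z.2.2‖ * h z * φ (z.1, z.2.1))‖₊ : ℝ≥0∞) ∂μT T)
          ≤ ∫⁻ z, (({z : ℝ × Torus3 × Vel3 | ‖z.2.2‖ ≤ 1}).indicator
              (fun _ => ENNReal.ofReal (M * C)) z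
            + ENNReal.ofReal M * ENNReal.ofReal (‖z.2.2‖ ^ 2 * h z)) ∂μT T :=
            lintegral_mono_ae hbd
        _ = ENNReal.ofReal (M * C) * μT T {z : ℝ × Torus3 × Vel3 | ‖z.2.2‖ ≤ 1}
            + ENNReal.ofReal M * ∫⁻ z, ENNReal.ofReal (‖z.2.2‖ ^ 2 * h z) ∂μT T := by
            rw [lintegral_add_left (measurable_const.indicator (hSm 1)),
              lintegral_indicator_const (hSm 1),
              lintegral_const_mul' _ _ ofReal_ne_top]
        _ < ⊤ := by
            refine ENNReal.add_lt_top.2 ⟨?_, ?_⟩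
            · exact ENNReal.mul_lt_top ofReal_lt_top (hSball 1)
            · exact ENNReal.mul_lt_top ofReal_lt_top
                (lt_of_le_of_lt hhmom ofReal_lt_top)
    refine ⟨hψint, fun R hR => ?_⟩
    have htr : Integrable (fun z => h z * trunc R z) (μT T) :=
      hprodint h (trunc R) hhm hhbd (htruncint R)
    rw [← integral_sub hψint htr]
    have hdint : Integrable (fun z => ‖z.2.2‖ * h z * φ (z.1, z.2.1) - h z * trunc R z) (μT T) :=
      hψint.sub htr
    have hlint : (∫⁻ z, ENNReal.ofReal ‖‖z.2.2‖ * h z * φ (z.1, z.2.1) - h z * trunc R z‖ ∂μT T)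
        ≤ ENNReal.ofReal (M * K / R) := by
      have hptws : ∀ᵐ z ∂μT T,
          ENNReal.ofReal ‖‖z.2.2‖ * h z * φ (z.1, z.2.1) - h z * trunc R z‖
          ≤ ENNReal.ofReal (M / R) * ENNReal.ofReal (‖z.2.2‖ ^ 2 * h z) := by
        filter_upwards [hφM', hhbd] with z hz hhz
        rw [← ENNReal.ofReal_mul (div_nonneg hM0 hR.le)]
        apply ENNReal.ofReal_le_ofReal
        by_cases hv : ‖z.2.2‖ ≤ R
        · have hzero : ‖z.2.2‖ * h z * φ (z.1, z.2.1) - h z * trunc R z = 0 := by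
            simp only [htruncdef, if_pos hv]; ring
          rw [hzero, norm_zero]
          exact mul_nonneg (div_nonneg hM0 hR.le) (mul_nonneg (by positivity) hhz.1)
        · have htr0 : trunc R z = 0 := by simp only [htruncdef, if_neg hv]
          rw [htr0, mul_zero, sub_zero]
          push_neg at hv
          have hvv : ‖z.2.2‖ * R ≤ ‖z.2.2‖ ^ 2 := by nlinarith [norm_nonneg z.2.2]
          rw [Real.norm_eq_abs, abs_mul, abs_of_nonneg (mul_nonneg (norm_nonneg _) hhz.1)]
          rw [div_mul_eq_mul_div, le_div_iff₀ hR]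
          calc ‖z.2.2‖ * h z * |φ (z.1, z.2.1)| * R ≤ ‖z.2.2‖ * h z * M * R :=
                mul_le_mul_of_nonneg_right
                  (mul_le_mul_of_nonneg_left hz.1 (mul_nonneg (norm_nonneg _) hhz.1)) hR.le
            _ ≤ M * (‖z.2.2‖ ^ 2 * h z) := by
                nlinarith [mul_le_mul_of_nonneg_left
                  (mul_le_mul_of_nonneg_right hvv hhz.1) hM0]
      calc (∫⁻ z, ENNReal.ofReal ‖‖z.2.2‖ * h z * φ (z.1, z.2.1) - h z * trunc R z‖ ∂μT T)
          ≤ ∫⁻ z, ENNReal.ofReal (M / R) * ENNReal.ofReal (‖z.2.2‖ ^ 2 * h z) ∂μT T :=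
            lintegral_mono_ae hptws
        _ = ENNReal.ofReal (M / R) * ∫⁻ z, ENNReal.ofReal (‖z.2.2‖ ^ 2 * h z) ∂μT T :=
            lintegral_const_mul' _ _ ofReal_ne_top
        _ ≤ ENNReal.ofReal (M / R) * ENNReal.ofReal K := mul_le_mul_right hhmom _
        _ = ENNReal.ofReal (M * K / R) := by
            rw [← ENNReal.ofReal_mul (div_nonneg hM0 hR.le), div_mul_eq_mul_div]
    have hnormle := (aux_int_le (B := M * K / R) (div_nonneg (mul_nonneg hM0 hK) hR.le)
      hdint.norm.aestronglyMeasurable (Eventually.of_forall fun z => norm_nonneg _) hlint).2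
    calc |∫ z, (‖z.2.2‖ * h z * φ (z.1, z.2.1) - h z * trunc R z) ∂μT T|
        = ‖∫ z, (‖z.2.2‖ * h z * φ (z.1, z.2.1) - h z * trunc R z) ∂μT T‖ :=
          (Real.norm_eq_abs _).symm
      _ ≤ ∫ z, ‖‖z.2.2‖ * h z * φ (z.1, z.2.1) - h z * trunc R z‖ ∂μT T :=
          norm_integral_le_integral_norm _
      _ ≤ M * K / R := hnormle
  -- conclude
  obtain ⟨hfint, hftail⟩ := main f hfmeas hfbd hmomf
  have hfk' := fun k => main (fk k) (hfkmeas k) (hfkbd k) (hmom k)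
  refine ⟨hfint, ?_⟩
  rw [Metric.tendsto_atTop]
  intro ε hε
  set R := 3 * M * K / ε + 1 with hRdef
  have hR : 0 < R := by positivity
  have hRb : M * K / R < ε / 3 := by
    rw [div_lt_iff₀ hR]
    have h1 : ε / 3 * (3 * M * K / ε) = M * K := by field_simp
    have h2 : ε / 3 * R = M * K + ε / 3 := by rw [hRdef, mul_add, h1, mul_one]
    linarith
  obtain ⟨N, hN⟩ := Metric.tendsto_atTop.1 (hconv (trunc R) (htruncint R)) (ε / 3) (by positivity)
  refine ⟨N, fun k hk => ?_⟩
  have h1 := (hfk' k).2 R hR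
  have h2 := hftail R hR
  have h3 := hN k hk
  rw [Real.dist_eq] at h3 ⊢
  rw [abs_sub_comm] at h2
  calc |(∫ z, ‖z.2.2‖ * fk k z * φ (z.1, z.2.1) ∂μT T)
        - ∫ z, ‖z.2.2‖ * f z * φ (z.1, z.2.1) ∂μT T|
      ≤ |(∫ z, ‖z.2.2‖ * fk k z * φ (z.1, z.2.1) ∂μT T) - ∫ z, fk k z * trunc R z ∂μT T|
        + |(∫ z, fk k z * trunc R z ∂μT T) - ∫ z, f z * trunc R z ∂μT T|
        + |(∫ z, f z * trunc R z ∂μT T) - ∫ z, ‖z.2.2‖ * f z * φ (z.1, z.2.1) ∂μT T| := by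
        have ha := abs_sub_le (∫ z, ‖z.2.2‖ * fk k z * φ (z.1, z.2.1) ∂μT T)
          (∫ z, fk k z * trunc R z ∂μT T) (∫ z, ‖z.2.2‖ * f z * φ (z.1, z.2.1) ∂μT T)
        have hb := abs_sub_le (∫ z, fk k z * trunc R z ∂μT T)
          (∫ z, f z * trunc R z ∂μT T) (∫ z, ‖z.2.2‖ * f z * φ (z.1, z.2.1) ∂μT T)
        linarith
    _ < ε := by linarith
end
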